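/- (L¹ approximation of monotone functions by functions constant on a fixed partition.) Let Tmax > 0, δ' > 0 and let ν be a finite Borel measure on [0, Tmax). There exist finitely many points a_1 < … < a_M in [0, Tmax) and finitely many pairwise disjoint intervals I_1, …, I_L with ν(I_l) ≤ δ' for every l, such that {a_1, …, a_M} ∪ I_1 ∪ … ∪ I_L = [0, Tmax), and such that for every B ≥ 1 and every non-decreasing function w : [0, Tmax) → [1, B], the function w̃ defined by w̃(a_m) = w(a_m) for each m and w̃(t) = inf_{s ∈ I_l} w(s) for t ∈ I_l satisfies ∫_{[0,Tmax)} | w − w̃ | dν ≤ B·δ'. -/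

import Mathlib

open MeasureTheory

lemma aux_Ico_lim (ν : Measure ℝ) (b : ℝ) (c : ENNReal)
    (h : ∀ x, x < b → ν (Set.Ico 0 x) ≤ c) : ν (Set.Ico 0 b) ≤ c := by
  have hU : Set.Ico (0:ℝ) b ⊆ ⋃ n : ℕ, Set.Ico (0:ℝ) (b - 1/(n+1)) := by
    intro x hx
    have hbx : 0 < b - x := sub_pos.2 hx.2
    obtain ⟨n, hn⟩ := exists_nat_gt (1/(b - x))
    have h1 : 1/(b - x) < (n:ℝ)+1 := hn.trans (lt_add_one _)
    have hn1 : (0:ℝ) < (n:ℝ)+1 := by positivity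
    have h2 : 1/((n:ℝ)+1) < b - x := by
      rw [div_lt_iff₀ hbx] at h1
      rw [div_lt_iff₀ hn1]
      nlinarith
    exact Set.mem_iUnion.2 ⟨n, hx.1, by push_cast; linarith⟩
  have hmono : Monotone (fun n : ℕ => Set.Ico (0:ℝ) (b - 1/(n+1))) := by
    intro n m hnm
    apply Set.Ico_subset_Ico_right
    have : 1/((m:ℝ)+1) ≤ 1/((n:ℝ)+1) := by
      apply one_div_le_one_div_of_le (by positivity)
      exact_mod_cast by exact_mod_cast add_le_add_left (Nat.cast_le.2 hnm) 1
    linarith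
  calc ν (Set.Ico 0 b) ≤ ν (⋃ n : ℕ, Set.Ico (0:ℝ) (b - 1/(n+1))) := measure_mono hU
    _ = ⨆ n : ℕ, ν (Set.Ico (0:ℝ) (b - 1/(n+1))) := (hmono.directed_le).measure_iUnion
    _ ≤ c := by
        apply iSup_le
        intro n
        apply h
        have : (0:ℝ) < 1/((n:ℝ)+1) := by positivity
        push_cast
        linarith

lemma aux_Ioo_lim (ν : Measure ℝ) (a b : ℝ) (hab : a < b) (c : ENNReal)
    (h : ∀ s, a < s → s < b → ν (Set.Ico s b) ≤ c) : ν (Set.Ioo a b) ≤ c := by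
  have hba : 0 < b - a := sub_pos.2 hab
  have hU : Set.Ioo a b ⊆ ⋃ n : ℕ, Set.Ico (a + (b-a)/(n+1)) b := by
    intro x hx
    have hxa : 0 < x - a := sub_pos.2 hx.1
    obtain ⟨n, hn⟩ := exists_nat_gt ((b-a)/(x-a))
    have h1 : (b-a)/(x-a) < (n:ℝ)+1 := hn.trans (lt_add_one _)
    have hn1 : (0:ℝ) < (n:ℝ)+1 := by positivity
    have h2 : (b-a)/((n:ℝ)+1) < x - a := by
      rw [div_lt_iff₀ hxa] at h1
      rw [div_lt_iff₀ hn1]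
      nlinarith
    exact Set.mem_iUnion.2 ⟨n, by push_cast; constructor <;> [linarith; exact hx.2]⟩
  have hmono : Monotone (fun n : ℕ => Set.Ico (a + (b-a)/(n+1)) b) := by
    intro n m hnm
    apply Set.Ico_subset_Ico_left
    have : (b-a)/((m:ℝ)+1) ≤ (b-a)/((n:ℝ)+1) := by
      apply div_le_div_of_nonneg_left hba.le (by positivity)
      exact_mod_cast add_le_add_left (Nat.cast_le.2 hnm) 1
    linarith
  calc ν (Set.Ioo a b) ≤ ν (⋃ n : ℕ, Set.Ico (a + (b-a)/(n+1)) b) := measure_mono hU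
    _ = ⨆ n : ℕ, ν (Set.Ico (a + (b-a)/(n+1)) b) := (hmono.directed_le).measure_iUnion
    _ ≤ c := by
        apply iSup_le
        intro n
        have hpos : (0:ℝ) < (b-a)/((n:ℝ)+1) := by positivity
        rcases lt_or_ge (a + (b-a)/((n:ℝ)+1)) b with hlt | hge
        · exact h _ (by linarith) hlt
        · rw [Set.Ico_eq_empty (not_lt.2 hge)]
          simp

lemma chain_aux {α : Type*} [LinearOrder α] (f g : α → ℝ) (T : Finset α) :
    (∀ k ∈ T, g k ≤ f k) → (∀ k ∈ T, ∀ k' ∈ T, k < k' → f k ≤ g k') →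
    ∀ (hne : T.Nonempty), ∑ k ∈ T, (f k - g k) ≤ f (T.max' hne) - g (T.min' hne) := by
  classical
  induction T using Finset.strongInduction with
  | _ T IH =>
    intro h2 h4 hne
    set Mx := T.max' hne with hMx
    have hMxmem : Mx ∈ T := T.max'_mem hne
    rcases (T.erase Mx).eq_empty_or_nonempty with he | hne'
    · have hT : T = {Mx} := by
        apply Finset.eq_singleton_iff_unique_mem.mpr
        refine ⟨hMxmem, fun x hx => ?_⟩
        by_contra hx'
        exact (Finset.ne_empty_of_mem (Finset.mem_erase.mpr ⟨hx', hx⟩)) he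
      have hmin : T.min' hne = Mx := by
        apply le_antisymm (T.min'_le Mx hMxmem)
        apply Finset.le_min'
        intro y hy
        rw [hT, Finset.mem_singleton] at hy
        exact le_of_eq hy.symm
      rw [hmin, hT, Finset.sum_singleton]
    · have hsub : T.erase Mx ⊂ T := Finset.erase_ssubset hMxmem
      have IH' := IH _ hsub (fun k hk => h2 k (Finset.mem_of_mem_erase hk))
        (fun k hk k' hk' hlt => h4 k (Finset.mem_of_mem_erase hk) k' (Finset.mem_of_mem_erase hk') hlt) hne'
      have hsum : ∑ k ∈ T.erase Mx, (f k - g k) + (f Mx - g Mx) = ∑ k ∈ T, (f k - g k) :=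
        Finset.sum_erase_add T _ hMxmem
      have hM'mem : (T.erase Mx).max' hne' ∈ T := Finset.mem_of_mem_erase ((T.erase Mx).max'_mem hne')
      have hM'lt : (T.erase Mx).max' hne' < Mx :=
        lt_of_le_of_ne (T.le_max' _ hM'mem) (Finset.mem_erase.mp ((T.erase Mx).max'_mem hne')).1
      have h5 : f ((T.erase Mx).max' hne') ≤ g Mx := h4 _ hM'mem _ hMxmem hM'lt
      have hm'mem : (T.erase Mx).min' hne' ∈ T := Finset.mem_of_mem_erase ((T.erase Mx).min'_mem hne')
      have hminle : T.min' hne ≤ (T.erase Mx).min' hne' := T.min'_le _ hm'mem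
      have h6 : g (T.min' hne) ≤ g ((T.erase Mx).min' hne') := by
        rcases eq_or_lt_of_le hminle with heq | hlt
        · rw [heq]
        · exact (h2 _ (T.min'_mem hne)).trans (h4 _ (T.min'_mem hne) _ hm'mem hlt)
      linarith

theorem stmt_12 (Tmax δ' : ℝ) (hTmax : 0 < Tmax) (hδ' : 0 < δ')
    (ν : Measure ℝ) [IsFiniteMeasure ν] :
    ∃ (M L : ℕ) (a : Fin M → ℝ) (I : Fin L → Set ℝ),
      StrictMono a ∧ (∀ m, a m ∈ Set.Ico (0 : ℝ) Tmax) ∧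
      (∀ l, Convex ℝ (I l) ∧ I l ⊆ Set.Ico (0 : ℝ) Tmax ∧ ν (I l) ≤ ENNReal.ofReal δ') ∧
      (∀ l l', l ≠ l' → Disjoint (I l) (I l')) ∧
      (∀ l m, a m ∉ I l) ∧
      (Set.range a ∪ ⋃ l, I l) = Set.Ico (0 : ℝ) Tmax ∧
      ∀ (B : ℝ), 1 ≤ B → ∀ w : ℝ → ℝ, MonotoneOn w (Set.Ico (0 : ℝ) Tmax) →
        (∀ t ∈ Set.Ico (0 : ℝ) Tmax, w t ∈ Set.Icc (1 : ℝ) B) →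
        ∀ wt : ℝ → ℝ, (∀ m, wt (a m) = w (a m)) →
          (∀ l, ∀ t ∈ I l, wt t = sInf (w '' I l)) →
          ∫ t in Set.Ico (0 : ℝ) Tmax, |w t - wt t| ∂ν ≤ B * δ' := by
  classical
  -- choose K large
  obtain ⟨K, hK⟩ : ∃ K : ℕ, ν (Set.Ico (0:ℝ) Tmax) < ENNReal.ofReal (K * δ') := by
    obtain ⟨K, hK⟩ := exists_nat_gt ((ν (Set.Ico (0:ℝ) Tmax)).toReal / δ')
    refine ⟨K, ?_⟩
    rw [div_lt_iff₀ hδ'] at hK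
    calc ν (Set.Ico (0:ℝ) Tmax)
        = ENNReal.ofReal (ν (Set.Ico (0:ℝ) Tmax)).toReal :=
          (ENNReal.ofReal_toReal (measure_ne_top ν _)).symm
      _ < ENNReal.ofReal ((K:ℝ) * δ') :=
          (ENNReal.ofReal_lt_ofReal_iff (lt_of_le_of_lt ENNReal.toReal_nonneg hK)).2 hK
  set A : ℕ → Set ℝ := fun k =>
    {s | s ∈ Set.Ico (0:ℝ) Tmax ∧ ENNReal.ofReal (k * δ') ≤ ν (Set.Ico 0 s)} ∪ {Tmax} with hA
  set t : ℕ → ℝ := fun k => sInf (A k) with ht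
  have hA_ne : ∀ k, (A k).Nonempty := fun k => ⟨Tmax, Or.inr rfl⟩
  have ht_lb : ∀ k, ∀ x ∈ A k, (0:ℝ) ≤ x := by
    intro k x hx
    rcases hx with ⟨⟨h0, _⟩, _⟩ | hx
    · exact h0
    · rw [Set.mem_singleton_iff] at hx; rw [hx]; exact hTmax.le
  have hA_bdd : ∀ k, BddBelow (A k) := fun k => ⟨0, ht_lb k⟩
  have ht_nonneg : ∀ k, 0 ≤ t k := fun k => le_csInf (hA_ne k) (ht_lb k)
  have ht_le : ∀ k, t k ≤ Tmax := fun k => csInf_le (hA_bdd k) (Or.inr rfl)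
  have hA_anti : ∀ k, A (k+1) ⊆ A k := by
    intro k x hx
    rcases hx with ⟨hxD, hxν⟩ | hx
    · left
      refine ⟨hxD, le_trans (ENNReal.ofReal_le_ofReal ?_) hxν⟩
      push_cast
      nlinarith [hδ'.le]
    · right; exact hx
  have ht_mono : Monotone t :=
    monotone_nat_of_le_succ (fun k => csInf_le_csInf (hA_bdd k) (hA_ne (k+1)) (hA_anti k))
  have ht0 : t 0 = 0 := by
    apply le_antisymm _ (ht_nonneg 0)
    apply csInf_le (hA_bdd 0)
    left
    refine ⟨⟨le_refl 0, hTmax⟩, ?_⟩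
    simp
  have htK : t K = Tmax := by
    apply le_antisymm (ht_le K)
    apply le_csInf (hA_ne K)
    intro x hx
    rcases hx with ⟨hxD, hxν⟩ | hx
    · exfalso
      have h1 : ν (Set.Ico 0 x) ≤ ν (Set.Ico 0 Tmax) :=
        measure_mono (Set.Ico_subset_Ico_right hxD.2.le)
      exact absurd (hxν.trans h1) (not_le.2 hK)
    · rw [Set.mem_singleton_iff] at hx; rw [hx]
  have key_lower : ∀ (k : ℕ) (s : ℝ), t k < s → s ≤ Tmax →
      ENNReal.ofReal (k * δ') ≤ ν (Set.Ico 0 s) := by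
    intro k s hs hsT
    obtain ⟨u, hu, hus⟩ := exists_lt_of_csInf_lt (hA_ne k) hs
    rcases hu with ⟨_, huν⟩ | hu
    · exact huν.trans (measure_mono (Set.Ico_subset_Ico_right hus.le))
    · rw [Set.mem_singleton_iff] at hu
      exact absurd (hu ▸ hus) (not_lt.2 hsT)
  have key_upper : ∀ (k : ℕ) (s : ℝ), 0 ≤ s → s < Tmax → s < t (k+1) →
      ν (Set.Ico 0 s) < ENNReal.ofReal (((k:ℝ)+1) * δ') := by
    intro k s hs0 hsT hst
    have hns : s ∉ A (k+1) := notMem_of_lt_csInf hst (hA_bdd (k+1))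
    rw [hA] at hns
    simp only [Set.mem_union, Set.mem_setOf_eq, Set.mem_singleton_iff, not_or, not_and] at hns
    have h1 := hns.1 ⟨hs0, hsT⟩
    rw [not_le] at h1
    convert h1 using 2
    push_cast
    ring
  have hIν : ∀ k : ℕ, ν (Set.Ioo (t k) (t (k+1))) ≤ ENNReal.ofReal δ' := by
    intro k
    rcases le_or_gt (t (k+1)) (t k) with hle | hlt
    · rw [Set.Ioo_eq_empty (not_lt.2 hle)]; simp
    · have hb'T : t (k+1) ≤ Tmax := ht_le (k+1)
      have ha'0 : 0 ≤ t k := ht_nonneg k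
      have claimA : ∀ x, x < t (k+1) → ν (Set.Ico 0 x) ≤ ENNReal.ofReal (((k:ℝ)+1) * δ') := by
        intro x hx
        have hm1 : t k < max x ((t k + t (k+1))/2) :=
          lt_of_lt_of_le (by linarith) (le_max_right _ _)
        have hm2 : max x ((t k + t (k+1))/2) < t (k+1) := max_lt hx (by linarith)
        have h := key_upper k _ (le_trans ha'0 hm1.le) (lt_of_lt_of_le hm2 hb'T) hm2
        exact (measure_mono (Set.Ico_subset_Ico_right (le_max_left _ _))).trans h.le
      have hIcob : ν (Set.Ico 0 (t (k+1))) ≤ ENNReal.ofReal (((k:ℝ)+1) * δ') :=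
        aux_Ico_lim ν _ _ claimA
      apply aux_Ioo_lim ν _ _ hlt
      intro s hs1 hs2
      have hlow : ENNReal.ofReal (k * δ') ≤ ν (Set.Ico 0 s) :=
        key_lower k s hs1 (hs2.le.trans hb'T)
      have hsplit : ν (Set.Ico 0 s) + ν (Set.Ico s (t (k+1))) = ν (Set.Ico 0 (t (k+1))) := by
        rw [← measure_union (Set.Ico_disjoint_Ico_same) measurableSet_Ico]
        rw [Set.Ico_union_Ico_eq_Ico (le_trans ha'0 hs1.le) hs2.le]
      have hadd : ν (Set.Ico s (t (k+1))) + ν (Set.Ico 0 s)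
          ≤ ENNReal.ofReal δ' + ν (Set.Ico 0 s) := by
        calc ν (Set.Ico s (t (k+1))) + ν (Set.Ico 0 s) = ν (Set.Ico 0 (t (k+1))) := by
              rw [add_comm]; exact hsplit
          _ ≤ ENNReal.ofReal (((k:ℝ)+1) * δ') := hIcob
          _ = ENNReal.ofReal δ' + ENNReal.ofReal ((k:ℝ) * δ') := by
              rw [← ENNReal.ofReal_add hδ'.le (by positivity)]
              congr 1; ring
          _ ≤ ENNReal.ofReal δ' + ν (Set.Ico 0 s) := add_le_add_right hlow _
      exact (ENNReal.add_le_add_iff_right (measure_ne_top ν _)).1 hadd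
  -- points
  set S : Finset ℝ := ((Finset.range (K+1)).image t).filter (fun x => x < Tmax) with hS
  set a : Fin S.card → ℝ := ⇑(S.orderEmbOfFin rfl) with ha
  have ha_strict : StrictMono a := (S.orderEmbOfFin rfl).strictMono
  have hrange : Set.range a = ↑S := S.range_orderEmbOfFin rfl
  have hSmem : ∀ x ∈ S, ∃ j ≤ K, t j = x := by
    intro x hx
    rw [hS, Finset.mem_filter, Finset.mem_image] at hx
    obtain ⟨⟨j, hj, hjx⟩, _⟩ := hx
    exact ⟨j, Nat.lt_succ_iff.1 (Finset.mem_range.1 hj), hjx⟩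
  have hSD : ∀ x ∈ S, x ∈ Set.Ico (0:ℝ) Tmax := by
    intro x hx
    obtain ⟨j, _, hjx⟩ := hSmem x hx
    have hlt : x < Tmax := by
      rw [hS, Finset.mem_filter] at hx; exact hx.2
    exact ⟨hjx ▸ ht_nonneg j, hlt⟩
  have haD : ∀ m, a m ∈ Set.Ico (0:ℝ) Tmax := by
    intro m
    apply hSD
    have : a m ∈ Set.range a := Set.mem_range_self m
    rw [hrange] at this
    exact this
  set I : Fin K → Set ℝ := fun l => Set.Ioo (t l.val) (t (l.val+1)) with hI
  have hIsub : ∀ l, I l ⊆ Set.Ico (0:ℝ) Tmax := by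
    intro l x hx
    have h1 : t (l.val + 1) ≤ t K := ht_mono (Nat.succ_le_of_lt l.isLt)
    exact ⟨le_trans (ht_nonneg l.val) hx.1.le, lt_of_lt_of_le hx.2 (h1.trans_eq htK)⟩
  have hIdisj : ∀ l l' : Fin K, l ≠ l' → Disjoint (I l) (I l') := by
    have key : ∀ l l' : Fin K, l < l' → Disjoint (I l) (I l') := by
      intro l l' hll
      rw [Set.disjoint_left]
      intro x hx hx'
      have h1 : t (l.val + 1) ≤ t l'.val := ht_mono (Nat.succ_le_of_lt hll)
      have := hx.2
      have := hx'.1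
      linarith
    intro l l' hne
    rcases lt_trichotomy l l' with h | h | h
    · exact key l l' h
    · exact absurd h hne
    · exact (key l' l h).symm
  have hnotin : ∀ (l : Fin K) (m : Fin S.card), a m ∉ I l := by
    intro l m hmem
    have haS : a m ∈ S := by
      have : a m ∈ Set.range a := Set.mem_range_self m
      rwa [hrange] at this
    obtain ⟨j, hjK, hj⟩ := hSmem _ haS
    rw [← hj] at hmem
    rcases le_or_gt j l.val with h | h
    · exact absurd hmem.1 (not_lt.2 (ht_mono h))
    · exact absurd hmem.2 (not_lt.2 (ht_mono (Nat.succ_le_of_lt h)))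
  have hUnion : (Set.range a ∪ ⋃ l, I l) = Set.Ico (0:ℝ) Tmax := by
    apply Set.Subset.antisymm
    · intro x hx
      rcases hx with hx | hx
      · rw [hrange] at hx; exact hSD x hx
      · obtain ⟨l, hl⟩ := Set.mem_iUnion.1 hx
        exact hIsub l hl
    · intro x hx
      by_cases hex : ∃ j, j ≤ K ∧ t j = x
      · left
        rw [hrange]
        obtain ⟨j, hjK, hj⟩ := hex
        exact Finset.mem_coe.2 (Finset.mem_filter.2
          ⟨Finset.mem_image.2 ⟨j, Finset.mem_range.2 (Nat.lt_succ_of_le hjK), hj⟩, hx.2⟩)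
      · right
        push_neg at hex
        have hP0 : t 0 < x := by
          rw [ht0]
          exact lt_of_le_of_ne hx.1 (fun h => hex 0 (Nat.zero_le K) (ht0.trans h))
        have hk_spec : t (Nat.findGreatest (fun j => t j < x) K) < x :=
          Nat.findGreatest_spec (P := fun j => t j < x) (Nat.zero_le K) hP0
        have hkK : Nat.findGreatest (fun j => t j < x) K ≤ K := Nat.findGreatest_le K
        have hkltK : Nat.findGreatest (fun j => t j < x) K < K := by
          rcases lt_or_eq_of_le hkK with h | h
          · exact h
          · exfalso; rw [h, htK] at hk_spec; exact absurd hx.2 (not_lt.2 hk_spec.le)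
        have hnot : ¬ (t (Nat.findGreatest (fun j => t j < x) K + 1) < x) :=
          Nat.findGreatest_is_greatest (P := fun j => t j < x) (Nat.lt_succ_self _) hkltK
        have hxlt : x < t (Nat.findGreatest (fun j => t j < x) K + 1) :=
          lt_of_le_of_ne (not_lt.1 hnot) (fun h => hex _ hkltK h.symm)
        exact Set.mem_iUnion.2 ⟨⟨Nat.findGreatest (fun j => t j < x) K, hkltK⟩, hk_spec, hxlt⟩
  refine ⟨S.card, K, a, I, ha_strict, haD, fun l => ⟨convex_Ioo _ _, hIsub l, hIν l.val⟩,
    hIdisj, hnotin, hUnion, ?_⟩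
  -- integral estimate
  intro B hB w hw hwmem wt hwt_pts hwt_int
  by_cases hint : IntegrableOn (fun s => |w s - wt s|) (Set.Ico (0:ℝ) Tmax) ν
  swap
  · rw [integral_undef hint]
    nlinarith
  · set g : ℝ → ℝ := fun s => |w s - wt s| with hg
    set P : (Fin S.card ⊕ Fin K) → Set ℝ := Sum.elim (fun m => {a m}) I with hP
    have hPU : ⋃ i, P i = Set.Ico (0:ℝ) Tmax := by
      rw [← hUnion, hP, Set.iUnion_sum]
      congr 1
      · exact Set.iUnion_singleton_eq_range a
    have hPm : ∀ i, MeasurableSet (P i) := by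
      rintro (m | l)
      · exact measurableSet_singleton _
      · exact measurableSet_Ioo
    have hPd : Pairwise (Function.onFun Disjoint P) := by
      rintro (m | l) (m' | l') hne
      · simp only [hP, Function.onFun, Sum.elim_inl]
        rw [Set.disjoint_singleton]
        exact fun h => hne (congrArg Sum.inl (ha_strict.injective h))
      · simp only [hP, Function.onFun, Sum.elim_inl, Sum.elim_inr]
        exact Set.disjoint_singleton_left.2 (hnotin l' m)
      · simp only [hP, Function.onFun, Sum.elim_inl, Sum.elim_inr]
        exact Set.disjoint_singleton_right.2 (hnotin l m')
      · simp only [hP, Function.onFun, Sum.elim_inr]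
        exact hIdisj l l' (fun h => hne (congrArg Sum.inr h))
    have hintU : IntegrableOn g (⋃ i, P i) ν := by rw [hPU]; exact hint
    -- bounds on images
    have himg_ne : ∀ l : Fin K, (I l).Nonempty → (w '' I l).Nonempty :=
      fun l h => h.image w
    have himg_bddB : ∀ l : Fin K, BddBelow (w '' I l) := by
      intro l
      refine ⟨1, ?_⟩
      rintro y ⟨x, hx, rfl⟩
      exact (hwmem x (hIsub l hx)).1
    have himg_bddA : ∀ l : Fin K, BddAbove (w '' I l) := by
      intro l
      refine ⟨B, ?_⟩
      rintro y ⟨x, hx, rfl⟩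
      exact (hwmem x (hIsub l hx)).2
    have hinf1 : ∀ l : Fin K, (I l).Nonempty → 1 ≤ sInf (w '' I l) := by
      intro l h
      apply le_csInf (himg_ne l h)
      rintro y ⟨x, hx, rfl⟩
      exact (hwmem x (hIsub l hx)).1
    have hsupB : ∀ l : Fin K, (I l).Nonempty → sSup (w '' I l) ≤ B := by
      intro l h
      apply csSup_le (himg_ne l h)
      rintro y ⟨x, hx, rfl⟩
      exact (hwmem x (hIsub l hx)).2
    have hinfsup : ∀ l : Fin K, (I l).Nonempty → sInf (w '' I l) ≤ sSup (w '' I l) :=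
      fun l h => csInf_le_csSup (himg_ne l h) (himg_bddB l) (himg_bddA l)
    set c : Fin K → ℝ :=
      fun l => if (I l).Nonempty then sSup (w '' I l) - sInf (w '' I l) else 0 with hc
    have hpt : ∀ m, ∫ s in ({a m} : Set ℝ), g s ∂ν ≤ 0 := by
      intro m
      have hb : ∀ x ∈ ({a m} : Set ℝ), ‖g x‖ ≤ 0 := by
        intro x hx
        rw [Set.mem_singleton_iff] at hx
        subst hx
        simp [hg, hwt_pts m]
      have hsub : ({a m} : Set ℝ) ⊆ Set.Ico (0:ℝ) Tmax := by
        rw [Set.singleton_subset_iff]; exact haD m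
      have hn := norm_setIntegral_le_of_norm_le_const (measure_lt_top ν _) hb
      calc ∫ s in ({a m} : Set ℝ), g s ∂ν ≤ ‖∫ s in ({a m} : Set ℝ), g s ∂ν‖ :=
            le_abs_self _
        _ ≤ 0 * (ν {a m}).toReal := hn
        _ = 0 := by ring
    have hintl : ∀ l : Fin K, ∫ s in I l, g s ∂ν ≤ c l * δ' := by
      intro l
      by_cases hne : (I l).Nonempty
      · have hcl : c l = sSup (w '' I l) - sInf (w '' I l) := by rw [hc]; simp [hne]
        have hclnn : 0 ≤ c l := by rw [hcl]; linarith [hinfsup l hne]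
        have hb : ∀ x ∈ I l, ‖g x‖ ≤ c l := by
          intro x hx
          have h1 : wt x = sInf (w '' I l) := hwt_int l x hx
          have h2 : sInf (w '' I l) ≤ w x := csInf_le (himg_bddB l) ⟨x, hx, rfl⟩
          have h3 : w x ≤ sSup (w '' I l) := le_csSup (himg_bddA l) ⟨x, hx, rfl⟩
          simp only [hg, Real.norm_eq_abs, abs_abs]
          rw [h1, abs_of_nonneg (by linarith), hcl]
          linarith
        have hn := norm_setIntegral_le_of_norm_le_const (measure_lt_top ν _) hb
        have htr : (ν (I l)).toReal ≤ δ' := ENNReal.toReal_le_of_le_ofReal hδ'.le (hIν l.val)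
        calc ∫ s in I l, g s ∂ν ≤ ‖∫ s in I l, g s ∂ν‖ := le_abs_self _
          _ ≤ c l * (ν (I l)).toReal := hn
          _ ≤ c l * δ' := mul_le_mul_of_nonneg_left htr hclnn
      · have hem : I l = ∅ := Set.not_nonempty_iff_eq_empty.1 hne
        have hcl : c l = 0 := by rw [hc]; simp [hne]
        rw [hem, hcl]
        simp
    have hsumc : ∑ l : Fin K, c l ≤ B - 1 := by
      have hfil : ∑ l : Fin K, c l =
          ∑ l ∈ Finset.univ.filter (fun l : Fin K => (I l).Nonempty),
            (sSup (w '' I l) - sInf (w '' I l)) := by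
        rw [Finset.sum_filter]
      rw [hfil]
      set T := Finset.univ.filter (fun l : Fin K => (I l).Nonempty) with hT
      have hTmem : ∀ l ∈ T, (I l).Nonempty := by
        intro l hl; rw [hT, Finset.mem_filter] at hl; exact hl.2
      rcases T.eq_empty_or_nonempty with he | hne
      · rw [he]; simp; linarith
      · have hch := chain_aux (fun l => sSup (w '' I l)) (fun l => sInf (w '' I l)) T
          (fun k hk => hinfsup k (hTmem k hk)) ?_ hne
        · refine le_trans hch ?_
          have h1 := hsupB _ (hTmem _ (T.max'_mem hne))
          have h2 := hinf1 _ (hTmem _ (T.min'_mem hne))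
          linarith
        · intro k hk k' hk' hlt
          apply csSup_le (himg_ne k (hTmem k hk))
          rintro y ⟨x, hx, rfl⟩
          apply le_csInf (himg_ne k' (hTmem k' hk'))
          rintro z ⟨x', hx', rfl⟩
          apply hw (hIsub k hx) (hIsub k' hx')
          have hmono' : t (k.val + 1) ≤ t k'.val := ht_mono (Nat.succ_le_of_lt hlt)
          have := hx.2
          have := hx'.1
          linarith
    calc ∫ s in Set.Ico (0:ℝ) Tmax, |w s - wt s| ∂ν
        = ∫ s in ⋃ i, P i, g s ∂ν := by rw [hPU]
      _ = ∑' i, ∫ s in P i, g s ∂ν := integral_iUnion hPm hPd hintU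
      _ = ∑ i, ∫ s in P i, g s ∂ν := tsum_fintype _
      _ = (∑ m, ∫ s in ({a m} : Set ℝ), g s ∂ν) + ∑ l, ∫ s in I l, g s ∂ν := by
          rw [Fintype.sum_sum_type]
          simp only [hP, Sum.elim_inl, Sum.elim_inr]
      _ ≤ 0 + ∑ l, c l * δ' := by
          apply add_le_add
          · exact Finset.sum_nonpos (fun m _ => hpt m)
          · exact Finset.sum_le_sum (fun l _ => hintl l)
      _ = (∑ l, c l) * δ' := by rw [zero_add, Finset.sum_mul]
      _ ≤ (B - 1) * δ' := mul_le_mul_of_nonneg_right hsumc hδ'.le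
      _ ≤ B * δ' := by nlinarith
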